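/- arXiv:1712.05521 — 8 statements merged into one kernel-verified Lean document; each statement's English description precedes it below -/
import Mathlib

section
/- Let G be a Hausdorff topological abelian group. Then every functionally bounded subset A of G is precompact (totally bounded). -/
open Filter Set Topology NNReal

lemma exists_bump {G : Type*} [AddCommGroup G] [TopologicalSpace G] [IsTopologicalAddGroup G]
    (W : Set G) (hW : W ∈ nhds (0 : G)) :
    ∃ φ : G → ℝ, Continuous φ ∧ φ 0 = 1 ∧ (∀ x, 0 ≤ φ x) ∧ ∀ x, x ∉ W → φ x = 0 := by
  classical
  have key : ∀ S : Set G, S ∈ nhds (0 : G) → ∃ T : Set G, T ∈ nhds (0 : G) ∧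
      (∀ x ∈ T, -x ∈ T) ∧ ∀ p ∈ T, ∀ q ∈ T, ∀ r ∈ T, p + q + r ∈ S := by
    intro S hS
    obtain ⟨V1, hV1, h1⟩ := exists_nhds_zero_half hS
    obtain ⟨V2, hV2, h2⟩ := exists_nhds_zero_half hV1
    have hneg : {x : G | -x ∈ V2} ∈ nhds (0 : G) := by
      have : ContinuousAt (fun x : G => -x) 0 := continuous_neg.continuousAt
      exact this.preimage_mem_nhds (by simpa using hV2)
    have h0V2 : (0 : G) ∈ V2 := mem_of_mem_nhds hV2
    have hV21 : V2 ⊆ V1 := fun v hv => by simpa using h2 v hv 0 h0V2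
    refine ⟨V2 ∩ {x | -x ∈ V2}, Filter.inter_mem hV2 hneg, ?_, ?_⟩
    · rintro x ⟨h1x, h2x⟩
      exact ⟨h2x, by simpa using h1x⟩
    · rintro p ⟨hp, -⟩ q ⟨hq, -⟩ r ⟨hr, -⟩
      exact h1 _ (h2 p hp q hq) _ (hV21 hr)
  choose! T hTn hTsym hTtriple using key
  set V : ℕ → Set G := fun n => Nat.rec (T W) (fun _ S => T S) n with hVdef
  have hV0 : V 0 = T W := rfl
  have hVs : ∀ n, V (n + 1) = T (V n) := fun n => rfl
  have hVn : ∀ n, V n ∈ nhds (0 : G) := by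
    intro n
    induction n with
    | zero => exact hTn W hW
    | succ n ih => rw [hVs]; exact hTn _ ih
  have hzero : ∀ n, (0 : G) ∈ V n := fun n => mem_of_mem_nhds (hVn n)
  have hsym : ∀ n, ∀ x ∈ V n, -x ∈ V n := by
    intro n
    cases n with
    | zero => exact hTsym W hW
    | succ n => rw [hVs]; exact hTsym _ (hVn n)
  have htriple : ∀ n, ∀ p ∈ V (n+1), ∀ q ∈ V (n+1), ∀ r ∈ V (n+1), p + q + r ∈ V n := by
    intro n
    rw [hVs]; exact hTtriple _ (hVn n)
  have hsub : ∀ n, V (n + 1) ⊆ V n := fun n x hx => by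
    simpa using htriple n x hx 0 (by rw [hVs]; exact mem_of_mem_nhds (hTn _ (hVn n))) 0
      (by rw [hVs]; exact mem_of_mem_nhds (hTn _ (hVn n)))
  have hsubW : V 0 ⊆ W := fun x hx => by
    have := hTtriple W hW x (by rwa [hV0] at hx) 0 ?h0 0 ?h0
    · simpa using this
    case h0 => rw [← hV0]; exact hzero 0
  have hanti : ∀ m n, m ≤ n → V n ⊆ V m := by
    intro m n hmn
    induction hmn with
    | refl => exact subset_rfl
    | step h ih => exact fun x hx => ih (hsub _ hx)
  -- the premetric
  set d : G → G → ℝ≥0 := fun x y =>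
    if h : ∃ n, x - y ∉ V n then (1 / 2) ^ Nat.find h else 0 with hd_def
  have hd_self : ∀ x, d x x = 0 := by
    intro x
    simp only [hd_def]
    rw [dif_neg]
    push_neg
    intro n
    simpa using hzero n
  have hmemiff : ∀ x y : G, ∀ n, x - y ∉ V n ↔ y - x ∉ V n := by
    intro x y n
    constructor <;> intro h hmem <;>
      exact h (by simpa [neg_sub] using hsym n _ hmem)
  have hd_symm : ∀ x y, d x y = d y x := by
    intro x y
    simp only [hd_def]
    by_cases h : ∃ n, x - y ∉ V n
    · have h' : ∃ n, y - x ∉ V n := ⟨h.choose, (hmemiff x y _).1 h.choose_spec⟩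
      rw [dif_pos h, dif_pos h']
      congr 1
      exact le_antisymm (Nat.find_mono fun n hn => (hmemiff x y n).2 hn)
        (Nat.find_mono fun n hn => (hmemiff x y n).1 hn)
    · have h' : ¬∃ n, y - x ∉ V n := fun ⟨n, hn⟩ => h ⟨n, (hmemiff x y n).2 hn⟩
      rw [dif_neg h, dif_neg h']
  have hr : (1 / 2 : ℝ≥0) ∈ Set.Ioo (0 : ℝ≥0) 1 :=
    ⟨half_pos one_pos, NNReal.half_lt_self one_ne_zero⟩
  have hle_d : ∀ x y : G, ∀ n : ℕ, (1 / 2 : ℝ≥0) ^ n ≤ d x y ↔ x - y ∉ V n := by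
    intro x y n
    simp only [hd_def]
    split_ifs with h
    · rw [(pow_right_strictAnti₀ hr.1 hr.2).le_iff_ge, Nat.find_le_iff]
      exact ⟨fun ⟨m, hmn, hm⟩ hn => hm (hanti m n hmn hn), fun h => ⟨n, le_rfl, h⟩⟩
    · push_neg at h
      simp only [h n, not_true, iff_false, not_le]
      exact pow_pos hr.1 n
  have hquad : ∀ x₁ x₂ x₃ x₄ : G,
      d x₁ x₄ ≤ 2 * max (d x₁ x₂) (max (d x₂ x₃) (d x₃ x₄)) := by
    intro x₁ x₂ x₃ x₄
    by_cases H : ∃ n, x₁ - x₄ ∉ V n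
    · refine (dif_pos H).trans_le ?_
      rw [← div_le_iff₀' zero_lt_two, ← mul_one_div ((1 / 2 : ℝ≥0) ^ _), ← pow_succ]
      simp only [le_max_iff, hle_d, ← not_and_or]
      rintro ⟨h₁₂, h₂₃, h₃₄⟩
      refine Nat.find_spec H ?_
      have := htriple (Nat.find H) _ h₁₂ _ h₂₃ _ h₃₄
      rwa [show x₁ - x₂ + (x₂ - x₃) + (x₃ - x₄) = x₁ - x₄ by abel] at this
    · exact (dif_neg H).trans_le zero_le
  -- pseudometric
  set I : PseudoMetricSpace G := PseudoMetricSpace.ofPreNNDist d hd_self hd_symm with hI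
  set D : G → G → ℝ := fun x y => @dist G I.toDist x y with hD
  have hdist_le : ∀ x y, D x y ≤ d x y :=
    PseudoMetricSpace.dist_ofPreNNDist_le d hd_self hd_symm
  have hd_le : ∀ x y, (d x y : ℝ) ≤ 2 * D x y :=
    PseudoMetricSpace.le_two_mul_dist_ofPreNNDist d hd_self hd_symm hquad
  have hDtri : ∀ x y z : G, |D x z - D y z| ≤ D x y := fun x y z =>
    @abs_dist_sub_le G I x y z
  have hD0 : ∀ x, D x x = 0 := fun x => @dist_self G I x
  have hDcomm : ∀ x y, D x y = D y x := fun x y => @dist_comm G I x y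
  -- ψ continuous
  have hψ : Continuous fun x : G => D 0 x := by
    rw [continuous_iff_continuousAt]
    intro x
    rw [ContinuousAt, Metric.tendsto_nhds]
    intro ε hε
    obtain ⟨n, hn⟩ : ∃ n : ℕ, (1 / 2 : ℝ) ^ n < ε :=
      exists_pow_lt_of_lt_one hε (by norm_num)
    have hNx : {y : G | y - x ∈ V n} ∈ nhds x := by
      have hc : ContinuousAt (fun y : G => y - x) x :=
        (continuous_id.sub continuous_const).continuousAt
      have := hc.preimage_mem_nhds (by simpa using hVn n)
      exact this
    filter_upwards [hNx] with y hy
    have hxy : x - y ∈ V n := by simpa [neg_sub] using hsym n _ hy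
    have h1 : ¬((1 / 2 : ℝ≥0) ^ n ≤ d x y) := fun h => (hle_d x y n).1 h hxy
    rw [not_le] at h1
    have h2 : D x y < (1 / 2 : ℝ) ^ n := by
      calc D x y ≤ (d x y : ℝ) := hdist_le x y
        _ < ((1 / 2 : ℝ≥0) ^ n : ℝ≥0) := by exact_mod_cast h1
        _ = (1 / 2 : ℝ) ^ n := by push_cast; ring
    have h3 : |D 0 y - D 0 x| ≤ D x y := by
      have := hDtri y x 0
      rwa [hDcomm y 0, hDcomm x 0, hDcomm y x] at this
    rw [Real.dist_eq]
    exact lt_of_le_of_lt h3 (lt_trans h2 hn)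
  refine ⟨fun x => max (1 - 2 * D 0 x) 0, ?_, ?_, fun x => le_max_right _ _, ?_⟩
  · exact ((continuous_const.sub (continuous_const.mul hψ)).max continuous_const)
  · simp [hD0 0]
  · intro x hx
    have hx0 : x ∉ V 0 := fun h => hx (hsubW h)
    have h1 : (1 : ℝ≥0) ≤ d 0 x := by
      have := (hle_d 0 x 0).2 (by simpa [zero_sub] using fun h => hx0 (by simpa using hsym 0 _ h))
      simpa using this
    have h2 : (1 : ℝ) ≤ 2 * D 0 x := le_trans (by exact_mod_cast h1) (hd_le 0 x)
    have : 1 - 2 * D 0 x ≤ 0 := by linarith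
    exact max_eq_right this

theorem stmt1' {G : Type*} [AddCommGroup G] [TopologicalSpace G] [IsTopologicalAddGroup G]
    [T2Space G] (A : Set G)
    (hA : ∀ f : G → ℝ, Continuous f → ∃ C : ℝ, ∀ a ∈ A, |f a| ≤ C)
    (exists_bump : ∀ (W : Set G), W ∈ nhds (0 : G) →
      ∃ φ : G → ℝ, Continuous φ ∧ φ 0 = 1 ∧ (∀ x, 0 ≤ φ x) ∧ ∀ x, x ∉ W → φ x = 0) :
    ∀ U ∈ nhds (0 : G), ∃ F : Finset G, A ⊆ ⋃ g ∈ F, (fun u => g + u) '' U := by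
  classical
  intro U hU
  by_contra hcon
  push_neg at hcon
  -- a symmetric copy of U
  have hUneg : {x : G | -x ∈ U} ∈ nhds (0 : G) := by
    have : ContinuousAt (fun x : G => -x) 0 := continuous_neg.continuousAt
    exact this.preimage_mem_nhds (by simpa using hU)
  set U' : Set G := U ∩ {x | -x ∈ U} with hU'def
  have hU'nhds : U' ∈ nhds (0 : G) := Filter.inter_mem hU hUneg
  have hU'sub : U' ⊆ U := Set.inter_subset_left
  have hU'sym : ∀ x ∈ U', -x ∈ U' := by
    rintro x ⟨h1, h2⟩
    exact ⟨h2, by simpa using h1⟩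
  -- choice of separated points
  have hsep : ∀ F : Finset G, ∃ a, a ∈ A ∧ ∀ g ∈ F, a - g ∉ U := by
    intro F
    obtain ⟨a, haA, hna⟩ := Set.not_subset.1 (hcon F)
    refine ⟨a, haA, fun g hg hgU => ?_⟩
    exact hna (Set.mem_biUnion hg ⟨a - g, hgU, by simp⟩)
  choose c hcA hcsep using hsep
  set L : ℕ → Finset G := fun n => Nat.rec ∅ (fun _ F => insert (c F) F) n with hLdef
  have hLs : ∀ n, L (n + 1) = insert (c (L n)) (L n) := fun n => rfl
  set a : ℕ → G := fun n => c (L n) with hadef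
  have hLmono : ∀ m n, m ≤ n → L m ⊆ L n := by
    intro m n hmn
    induction hmn with
    | refl => exact Finset.Subset.refl _
    | step h ih =>
      refine ih.trans ?_
      rw [hLs]
      exact Finset.subset_insert _ _
  have hmem : ∀ m n, m < n → a m ∈ L n := by
    intro m n hmn
    have h1 : a m ∈ L (m + 1) := by rw [hLs]; exact Finset.mem_insert_self _ _
    exact hLmono (m + 1) n hmn h1
  have hsepU : ∀ m n, m < n → a n - a m ∉ U := fun m n h => hcsep (L n) (a m) (hmem m n h)
  have hsep2 : ∀ m n, m ≠ n → a n - a m ∉ U' := by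
    intro m n hmn hin
    rcases lt_or_gt_of_ne hmn with h | h
    · exact hsepU m n h (hU'sub hin)
    · exact hsepU n m h (hU'sub (by simpa using hU'sym _ hin))
  -- a small neighborhood W
  obtain ⟨V1, hV1, h1⟩ := exists_nhds_zero_half hU'nhds
  obtain ⟨V2, hV2, h2⟩ := exists_nhds_zero_half hV1
  have hV2neg : {x : G | -x ∈ V2} ∈ nhds (0 : G) := by
    have : ContinuousAt (fun x : G => -x) 0 := continuous_neg.continuousAt
    exact this.preimage_mem_nhds (by simpa using hV2)
  set W : Set G := V2 ∩ {x | -x ∈ V2} with hWdef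
  have hW : W ∈ nhds (0 : G) := Filter.inter_mem hV2 hV2neg
  have h0W : (0 : G) ∈ W := mem_of_mem_nhds hW
  have hquad : ∀ p ∈ W, ∀ q ∈ W, ∀ r ∈ W, ∀ s ∈ W, (p - q) - (r - s) ∈ U' := by
    rintro p ⟨hp, -⟩ q ⟨-, hq⟩ r ⟨-, hr⟩ s ⟨hs, -⟩
    have hpq : p - q ∈ V1 := by
      have := h2 p hp (-q) hq
      rwa [← sub_eq_add_neg] at this
    have hsr : s - r ∈ V1 := by
      have := h2 s hs (-r) hr
      rwa [← sub_eq_add_neg] at this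
    have := h1 _ hpq _ hsr
    rwa [show p - q + (s - r) = (p - q) - (r - s) by abel] at this
  -- the bump function
  obtain ⟨φ, hφc, hφ0, hφnn, hφW⟩ := exists_bump W hW
  have hφne : ∀ z : G, φ z ≠ 0 → z ∈ W := fun z h => by
    by_contra hz; exact h (hφW z hz)
  -- key disjointness
  have key : ∀ x : G, ∀ n m : ℕ, n ≠ m → ∀ y z : G, y - x ∈ W → z - x ∈ W →
      y - a n ∈ W → z - a m ∈ W → False := by
    intro x n m hnm y z hyx hzx hyn hzm
    have := hquad _ hyn _ hyx _ hzm _ hzx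
    rw [show (y - a n) - (y - x) - ((z - a m) - (z - x)) = a m - a n by abel] at this
    exact hsep2 n m hnm this
  -- the function
  set f : G → ℝ := fun x => ∑' n : ℕ, (n : ℝ) * φ (x - a n) with hfdef
  have hfc : Continuous f := by
    rw [continuous_iff_continuousAt]
    intro x
    have hNx : {y : G | y - x ∈ W} ∈ nhds x := by
      have hc : ContinuousAt (fun y : G => y - x) x :=
        (continuous_id.sub continuous_const).continuousAt
      have := hc.preimage_mem_nhds (by simpa using hW)
      exact this
    by_cases hex : ∃ n : ℕ, ∃ y : G, y - x ∈ W ∧ y - a n ∈ W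
    · obtain ⟨n₀, y₀, hy₀x, hy₀n⟩ := hex
      have heq : ∀ y ∈ {y : G | y - x ∈ W}, f y = (n₀ : ℝ) * φ (y - a n₀) := by
        intro y hy
        rw [hfdef]
        refine tsum_eq_single n₀ fun m hm => ?_
        have hzero : φ (y - a m) = 0 := by
          by_contra hne
          exact key x m n₀ hm y y₀ hy hy₀x (hφne _ hne) hy₀n
        rw [hzero, mul_zero]
      have hg : ContinuousAt (fun y : G => (n₀ : ℝ) * φ (y - a n₀)) x :=
        (continuous_const.mul (hφc.comp (continuous_id.sub continuous_const))).continuousAt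
      exact hg.congr (Filter.eventuallyEq_of_mem hNx fun y hy => (heq y hy).symm)
    · push_neg at hex
      have heq : ∀ y ∈ {y : G | y - x ∈ W}, f y = 0 := by
        intro y hy
        rw [hfdef]
        have : ∀ n : ℕ, (n : ℝ) * φ (y - a n) = 0 := by
          intro n
          have hzero : φ (y - a n) = 0 := by
            by_contra hne
            exact hex n y hy (hφne _ hne)
          rw [hzero, mul_zero]
        simp only [this, tsum_zero]
      have hg : ContinuousAt (fun _ : G => (0 : ℝ)) x := continuousAt_const
      exact hg.congr (Filter.eventuallyEq_of_mem hNx fun y hy => (heq y hy).symm)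
  -- f is unbounded on A
  obtain ⟨C, hC⟩ := hA f hfc
  obtain ⟨n, hn⟩ := exists_nat_gt C
  have hzeros : ∀ m : ℕ, m ≠ n → (m : ℝ) * φ (a n - a m) = 0 := by
    intro m hm
    have hzero : φ (a n - a m) = 0 := by
      apply hφW
      intro hmem
      have h := hquad _ hmem _ h0W _ h0W _ h0W
      rw [show (a n - a m) - 0 - ((0 : G) - 0) = a n - a m by abel] at h
      exact hsep2 m n hm h
    rw [hzero, mul_zero]
  have hfn : f (a n) = n := by
    have h1 : f (a n) = ∑' m : ℕ, (m : ℝ) * φ (a n - a m) := rfl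
    rw [h1, tsum_eq_single n hzeros, sub_self, hφ0, mul_one]
  have := hC (a n) (hcA (L n))
  rw [hfn] at this
  have : (n : ℝ) ≤ C := le_trans (le_abs_self _) this
  linarith

/-- In a Hausdorff topological abelian group, every functionally bounded subset is
precompact (totally bounded): for every neighborhood `U` of `0` there is a finite
set `F` with `A ⊆ F + U`. -/
theorem stmt1 {G : Type*} [AddCommGroup G] [TopologicalSpace G] [IsTopologicalAddGroup G]
    [T2Space G] (A : Set G)
    (hA : ∀ f : G → ℝ, Continuous f → ∃ C : ℝ, ∀ a ∈ A, |f a| ≤ C) :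
    ∀ U ∈ nhds (0 : G), ∃ F : Finset G, A ⊆ ⋃ g ∈ F, (fun u => g + u) '' U :=
  stmt1' A hA (fun W hW => exists_bump W hW)
end

section
/- Let X be a metrizable compact abelian group, κ an uncountable cardinal, G = X^κ with the product topology, and H = { g ∈ G : the support supp(g) = { i : g(i) ≠ 0 } is countable } with the subspace topology. Then H is a proper dense subgroup of G and H is sequentially compact. -/
/-- Let `X` be a nontrivial compact metrizable abelian topological group and `ι` an
uncountable index type.  Then `H = {g ∈ X^ι : supp g is countable}` is a proper dense
subgroup of the product, and `H` is sequentially compact. -/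
theorem stmt2 {X : Type*} [AddCommGroup X] [TopologicalSpace X] [IsTopologicalAddGroup X]
    [CompactSpace X] [TopologicalSpace.MetrizableSpace X] [Nontrivial X]
    {ι : Type*} [Uncountable ι] :
    let H : Set (ι → X) := {g | (Function.support g).Countable}
    (0 : ι → X) ∈ H ∧ (∀ a ∈ H, ∀ b ∈ H, a - b ∈ H) ∧
      H ≠ Set.univ ∧ Dense H ∧ IsSeqCompact H := by
  classical
  intro H
  refine ⟨?_, ?_, ?_, ?_, ?_⟩
  · show (Function.support (0 : ι → X)).Countable
    simp
  · intro a ha b hb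
    exact (Set.Countable.union ha hb).mono (Function.support_sub a b)
  · intro hH
    obtain ⟨x, hx⟩ := exists_ne (0 : X)
    have hmem : (fun _ : ι => x) ∈ H := hH ▸ Set.mem_univ _
    have hs : Function.support (fun _ : ι => x) = Set.univ := by
      ext i; simp [hx]
    rw [Set.mem_setOf_eq, hs, Set.countable_univ_iff] at hmem
    exact not_countable hmem
  · rw [dense_iff_inter_open]
    rintro U hU ⟨f, hf⟩
    obtain ⟨I, u, hu, hsub⟩ := isOpen_pi_iff.mp hU f hf
    refine ⟨fun i => if i ∈ I then f i else 0, hsub ?_, ?_⟩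
    · intro i hi
      simp only [Finset.mem_coe] at hi
      simp only [hi, if_pos]
      exact (hu i hi).2
    · apply I.countable_toSet.mono
      rw [Function.support_subset_iff']
      intro i hi
      simp only [Finset.mem_coe] at hi
      simp [hi]
  · intro u hu
    set S : Set ι := ⋃ n, Function.support (u n) with hS
    have hSc : S.Countable := Set.countable_iUnion fun n => hu n
    haveI := hSc.to_subtype
    obtain ⟨L, φ, hφ, hL⟩ := SeqCompactSpace.tendsto_subseq (fun n (i : S) => u n i)
    refine ⟨fun i => if h : i ∈ S then L ⟨i, h⟩ else 0, ?_, φ, hφ, ?_⟩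
    · apply hSc.mono
      intro i hi
      rw [Function.mem_support] at hi
      by_contra h
      simp [h] at hi
    · rw [tendsto_pi_nhds]
      intro i
      by_cases h : i ∈ S
      · simp only [h, dif_pos]
        exact ((continuous_apply (⟨i, h⟩ : S)).continuousAt.tendsto.comp hL :)
      · simp only [h, dif_neg, not_false_iff]
        have hz : ∀ n, u (φ n) i = 0 := fun n => by
          by_contra hne
          exact h (Set.mem_iUnion.mpr ⟨φ n, hne⟩)
        have : (fun n => (u ∘ φ) n i) = fun _ => (0 : X) := funext hz
        set_option linter.unnecessarySimpa false in simpa [Function.comp, hz] using tendsto_const_nhds (α := X) (f := Filter.atTop (α := ℕ))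
end

section
/- Let X be a metrizable compact abelian group, κ an uncountable cardinal, and H = { g ∈ X^κ : supp(g) is countable } with the subspace topology from the product. Then every continuous real-valued function on H is bounded, but H is not compact; in particular H is not a μ-space. -/
/-- Let `X` be a nontrivial compact metrizable abelian topological group, `ι` uncountable and
`H = {g ∈ X^ι : supp g countable}` with the subspace topology.  Then every continuous real
function on `H` is bounded, but `H` is not compact; in particular `H` is not a μ-space. -/
theorem stmt3 {X : Type*} [AddCommGroup X] [TopologicalSpace X] [IsTopologicalAddGroup X]
    [CompactSpace X] [TopologicalSpace.MetrizableSpace X] [Nontrivial X]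
    {ι : Type*} [Uncountable ι] :
    let H : Set (ι → X) := {g | (Function.support g).Countable}
    (∀ f : ↥H → ℝ, Continuous f → ∃ C : ℝ, ∀ x : ↥H, |f x| ≤ C) ∧
    ¬ IsCompact H ∧
    ¬ (∀ A : Set ↥H, (∀ f : ↥H → ℝ, Continuous f → ∃ C : ℝ, ∀ a ∈ A, |f a| ≤ C) →
        IsCompact (closure A)) := by
  intro H
  classical
  letI := TopologicalSpace.metrizableSpaceMetric X
  -- Part 1: pseudocompactness
  have h1 : ∀ f : ↥H → ℝ, Continuous f → ∃ C : ℝ, ∀ x : ↥H, |f x| ≤ C := by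
    intro f hf
    by_contra hC
    push_neg at hC
    choose x hx using hC
    set S : Set ι := ⋃ n : ℕ, Function.support ((x n).1 : ι → X) with hSdef
    have hScount : S.Countable := Set.countable_iUnion (fun n => (x n).2)
    set K : Set (ι → X) := {g | ∀ i, i ∉ S → g i = 0} with hKdef
    have hKH : K ⊆ H := by
      intro g hg
      refine hScount.mono ?_
      intro i hi
      by_contra h
      exact hi (hg i h)
    have hKclosed : IsClosed K := by
      have : K = ⋂ (i : ι) (_ : i ∉ S), {g : ι → X | g i = 0} := by
        ext g; simp [hKdef, Set.mem_iInter]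
      rw [this]
      exact isClosed_iInter fun i => isClosed_iInter fun _ =>
        isClosed_eq (continuous_apply i) continuous_const
    have hKcompact : IsCompact K := hKclosed.isCompact
    -- pull back to the subtype
    set K' : Set ↥H := Subtype.val ⁻¹' K with hK'def
    have himg : Subtype.val '' K' = K := by
      apply Set.eq_of_subset_of_subset
      · rintro _ ⟨a, ha, rfl⟩; exact ha
      · intro g hg; exact ⟨⟨g, hKH hg⟩, hg, rfl⟩
    have hK'compact : IsCompact K' := by
      rw [Topology.IsEmbedding.subtypeVal.isCompact_iff, himg]
      exact hKcompact
    obtain ⟨C, hCbd⟩ := hK'compact.exists_bound_of_continuousOn hf.continuousOn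
    obtain ⟨n, hn⟩ := exists_nat_gt C
    have hxn : x n ∈ K' := by
      intro i hi
      by_contra h
      exact hi (Set.mem_iUnion.2 ⟨n, h⟩)
    have := hCbd (x n) hxn
    rw [Real.norm_eq_abs] at this
    have := lt_of_lt_of_le (hx (n : ℝ)) this
    exact absurd (hn.trans this) (lt_irrefl C)
  -- Part 2: H not compact
  have h2 : ¬ IsCompact H := by
    intro hcomp
    have hdense : Dense H := by
      rw [dense_iff_inter_open]
      intro o ho ⟨y, hy⟩
      obtain ⟨I, u, hu, hsub⟩ := isOpen_pi_iff.1 ho y hy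
      refine ⟨fun i => if i ∈ I then y i else 0, hsub ?_, ?_⟩
      · intro i hi
        have hi' : i ∈ I := hi
        simpa [hi'] using (hu i hi').2
      · apply Set.Countable.mono (s₂ := (I : Set ι))
        · intro i hi
          by_contra h
          rw [Function.mem_support, if_neg (fun hmem : i ∈ I => h hmem)] at hi
          exact hi rfl
        · exact I.countable_toSet
    have hHuniv : H = Set.univ := by
      rw [← hcomp.isClosed.closure_eq, hdense.closure_eq]
    obtain ⟨x0, hx0⟩ := exists_ne (0 : X)
    have hmem : (fun _ : ι => x0) ∈ H := hHuniv ▸ Set.mem_univ _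
    have hsup : Function.support (fun _ : ι => x0) = Set.univ := by
      ext i; simp [Function.mem_support, hx0]
    rw [Set.mem_setOf_eq, hsup, Set.countable_univ_iff] at hmem
    exact not_countable hmem
  refine ⟨h1, h2, ?_⟩
  intro hmu
  have := hmu Set.univ (fun f hf => (h1 f hf).imp fun C h a _ => h a)
  rw [closure_univ] at this
  exact h2 (isCompact_iff_compactSpace.mpr (isCompact_univ_iff.mp this))
end

section
/- Let G be a complete Hausdorff topological abelian group, and suppose every subset of G that is countably compact in the Bohr topology (i.e., in a coarser Hausdorff group topology τ⁺ ≤ τ) is countably compact in G. Then every subset of G that is compact in τ⁺ is compact in τ. -/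
open Filter Set

lemma tb_of_ccover {G : Type*} [UniformSpace G] (K : Set G)
    (hcc : ∀ 𝒰 : ℕ → Set G, (∀ n, IsOpen (𝒰 n)) → K ⊆ ⋃ n, 𝒰 n →
      ∃ F : Finset ℕ, K ⊆ ⋃ n ∈ F, 𝒰 n) : TotallyBounded K := by
  by_contra h
  rw [TotallyBounded] at h
  push_neg at h
  obtain ⟨V, hV, hnc⟩ := h
  obtain ⟨W, hW, hWs, hWV⟩ := comp_symm_mem_uniformity_sets hV
  have key : ∀ s : Finset G, ∃ x ∈ K, ∀ y ∈ s, (x, y) ∉ V := by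
    intro s
    by_contra hx
    push_neg at hx
    refine hnc ↑s (s.finite_toSet) (fun x hxK => ?_)
    obtain ⟨y, hy, hyV⟩ := hx x hxK
    exact mem_biUnion hy hyV
  choose f hfK hfsep using key
  classical
  -- build the separated sequence
  let s : ℕ → Finset G := fun n => Nat.rec ∅ (fun m sm => insert (f sm) sm) n
  let x : ℕ → G := fun n => f (s n)
  have hs_succ : ∀ n, s (n+1) = insert (x n) (s n) := fun n => rfl
  have hs_mono : ∀ {m n}, m ≤ n → s m ⊆ s n := by
    intro m n h
    induction h with
    | refl => exact subset_rfl
    | @step k h ih =>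
        intro a ha
        rw [show k.succ = k + 1 from rfl, hs_succ k]
        exact Finset.mem_insert_of_mem (ih ha)
  have hxK : ∀ n, x n ∈ K := fun n => hfK (s n)
  have hxmem : ∀ {m n}, m < n → x m ∈ s n := by
    intro m n h
    have : x m ∈ s (m+1) := (hs_succ m) ▸ Finset.mem_insert_self _ _
    exact hs_mono h this
  have hsep : ∀ {m n}, m < n → (x n, x m) ∉ V := fun {m n} h => hfsep (s n) (x m) (hxmem h)
  -- cluster point via countable compactness
  set 𝒰 : ℕ → Set G := fun n => (closure (x '' {m | n ≤ m}))ᶜ with h𝒰def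
  have h𝒰open : ∀ n, IsOpen (𝒰 n) := fun n => isClosed_closure.isOpen_compl
  have hnotcover : ¬ K ⊆ ⋃ n, 𝒰 n := by
    intro hcov
    obtain ⟨F, hF⟩ := hcc 𝒰 h𝒰open hcov
    -- take N larger than all of F
    obtain ⟨N, hN⟩ : ∃ N, ∀ n ∈ F, n ≤ N := ⟨F.sup id, fun n hn => Finset.le_sup (f := id) hn⟩
    have hxN : x N ∈ ⋃ n ∈ F, 𝒰 n := hF (hxK N)
    obtain ⟨n, hn, hxn⟩ := mem_iUnion₂.1 hxN
    exact hxn (subset_closure ⟨N, hN n hn, rfl⟩)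
  -- so there's a cluster point a
  obtain ⟨a, haK, ha⟩ : ∃ a ∈ K, ∀ n, a ∈ closure (x '' {m | n ≤ m}) := by
    by_contra hc
    push_neg at hc
    exact hnotcover fun a haK => mem_iUnion.2 (by
      obtain ⟨n, hn⟩ := hc a haK
      exact ⟨n, hn⟩)
  -- derive contradiction using the ball around a
  have hball : UniformSpace.ball a W ∈ nhds a := UniformSpace.ball_mem_nhds a hW
  have h0 := (mem_closure_iff_nhds.1 (ha 0)) _ hball
  obtain ⟨y₁, hy₁b, m₁, _, rfl⟩ := h0
  have h1 := (mem_closure_iff_nhds.1 (ha (m₁+1))) _ hball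
  obtain ⟨y₂, hy₂b, m₂, hm₂, rfl⟩ := h1
  have hlt : m₁ < m₂ := hm₂
  refine hsep hlt (hWV ⟨a, ?_, hy₁b⟩)
  exact hWs.symm _ _ hy₂b


/-- Let `(G, τ)` be a complete Hausdorff topological abelian group and `τ⁺ ≤ τ` a coarser
Hausdorff group topology.  If every `τ⁺`-countably compact subset of `G` is `τ`-countably
compact, then every `τ⁺`-compact subset of `G` is `τ`-compact. -/
theorem stmt7 {G : Type*} [AddCommGroup G] (τ τp : TopologicalSpace G)
    (hτg : @IsTopologicalAddGroup G τ _) (hτpg : @IsTopologicalAddGroup G τp _)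
    (hτ2 : @T2Space G τ) (hτp2 : @T2Space G τp)
    (hle : ∀ s : Set G, @IsOpen G τp s → @IsOpen G τ s)
    (hcomp : @CompleteSpace G (@IsTopologicalAddGroup.rightUniformSpace G _ τ hτg))
    (hcc : ∀ A : Set G,
      (∀ 𝒰 : ℕ → Set G, (∀ n, @IsOpen G τp (𝒰 n)) → A ⊆ ⋃ n, 𝒰 n →
        ∃ F : Finset ℕ, A ⊆ ⋃ n ∈ F, 𝒰 n) →
      (∀ 𝒰 : ℕ → Set G, (∀ n, @IsOpen G τ (𝒰 n)) → A ⊆ ⋃ n, 𝒰 n →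
        ∃ F : Finset ℕ, A ⊆ ⋃ n ∈ F, 𝒰 n)) :
    ∀ K : Set G, @IsCompact G τp K → @IsCompact G τ K := by
  intro K hK
  letI u : UniformSpace G := @IsTopologicalAddGroup.rightUniformSpace G _ τ hτg
  have htopeq : u.toTopologicalSpace = τ := rfl
  -- K is τ-closed
  have hclp : @IsClosed G τp K := @IsCompact.isClosed G τp hτp2 K hK
  have hcl : @IsClosed G τ K := (@isOpen_compl_iff G K τ).1 (hle _ ((@isOpen_compl_iff G K τp).2 hclp))
  -- countable subcover property in τp
  have hccp : ∀ 𝒰 : ℕ → Set G, (∀ n, @IsOpen G τp (𝒰 n)) → K ⊆ ⋃ n, 𝒰 n →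
      ∃ F : Finset ℕ, K ⊆ ⋃ n ∈ F, 𝒰 n := fun 𝒰 ho hc =>
    hK.elim_finite_subcover 𝒰 ho hc
  have hcct := hcc K hccp
  have htb : @TotallyBounded G u K := tb_of_ccover K hcct
  have hcomplete : @IsComplete G u K := @IsClosed.isComplete G u hcomp K hcl
  exact (@isCompact_iff_totallyBounded_isComplete G u K).2 ⟨htb, hcomplete⟩
end

section
/- Let (G, τ) be a Hausdorff topological group and τ⁺ ≤ τ a coarser Hausdorff group topology. Suppose (G, τ) is a countably μ-space (every countable functionally bounded subset of (G, τ) has compact closure in (G, τ)) and every subset of G that is not functionally bounded in (G, τ) contains an infinite subset that is closed and discrete in (G, τ⁺). Then τ and τ⁺ have the same convergent sequences. -/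
open Filter Set

lemma aux_finite {X : Type*} [TopologicalSpace X] {K B : Set X} (hK : IsCompact K)
    (hBK : B ⊆ K) (hB : IsClosed B)
    (hiso : ∀ b ∈ B, ∃ U : Set X, IsOpen U ∧ U ∩ B = {b}) : B.Finite := by
  classical
  choose U hUo hUb using hiso
  set V : X → Set X := fun b => if h : b ∈ B then U b h else ∅ with hV
  have hVo : ∀ b ∈ B, IsOpen (V b) := by
    intro b hb; simp only [hV, dif_pos hb]; exact hUo b hb
  have hVb : ∀ b (hb : b ∈ B), V b ∩ B = {b} := by
    intro b hb; simp only [hV, dif_pos hb]; exact hUb b hb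
  have hBc : IsCompact B := hK.of_isClosed_subset hB hBK
  have hcov : B ⊆ ⋃ b ∈ B, V b := by
    intro x hx
    refine mem_biUnion hx ?_
    have hx2 : x ∈ V x ∩ B := by rw [hVb x hx]; exact mem_singleton x
    exact hx2.1
  obtain ⟨t, htB, htf, hsub⟩ := hBc.elim_finite_subcover_image hVo hcov
  refine htf.subset ?_
  intro x hx
  obtain ⟨b, hb, hxb⟩ := mem_iUnion₂.1 (hsub hx)
  have hxB : x ∈ V b ∩ B := ⟨hxb, hx⟩
  rw [hVb b (htB hb), mem_singleton_iff] at hxB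
  exact hxB ▸ hb

lemma aux_conv {X : Type*} {τ τp : TopologicalSpace X} (hle : τ ≤ τp)
    (h2 : @T2Space X τp) {K : Set X} (hK : @IsCompact X τ K) {u : ℕ → X} {a : X}
    (hu : ∀ n, u n ∈ K) (htp : Tendsto u atTop (@nhds X τp a)) :
    Tendsto u atTop (@nhds X τ a) := by
  by_contra h
  obtain ⟨V, hV, hfr⟩ := Filter.not_tendsto_iff_exists_frequently_notMem.1 h
  have hne : (atTop ⊓ 𝓟 {n | u n ∉ V}).NeBot := by
    rwa [Filter.frequently_iff_neBot] at hfr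
  obtain ⟨F, hF⟩ := @Ultrafilter.exists_le ℕ (atTop ⊓ 𝓟 {n | u n ∉ V}) hne
  have hKmem : K ∈ F.map u := by
    have : u ⁻¹' K = Set.univ := eq_univ_of_forall hu
    simp only [Ultrafilter.mem_map, this]; exact Filter.univ_mem
  obtain ⟨c, hcK, hc⟩ := @IsCompact.ultrafilter_le_nhds X τ K hK (F.map u) (le_principal_iff.2 hKmem)
  have hcp : (F.map u : Filter X) ≤ @nhds X τp c := hc.trans (nhds_mono hle)
  have hap : (F.map u : Filter X) ≤ @nhds X τp a :=
    le_trans (Filter.map_mono (hF.trans inf_le_left)) htp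
  have hca : c = a := by
    refine (@t2_iff_nhds X τp).1 h2 ?_
    exact Filter.neBot_of_le (le_inf hcp hap)
  subst hca
  have hVmem : V ∈ F.map u := hc (by exact hV)
  have hVc : Vᶜ ∈ F.map u := by
    have hS : {n | u n ∉ V} ∈ F := le_principal_iff.1 (hF.trans inf_le_right)
    exact mem_map.2 (F.mem_of_superset hS fun n hn => hn)
  have : V ∩ Vᶜ ∈ F.map u := inter_mem hVmem hVc
  simp at this

/-- Let `(G, τ)` be a Hausdorff topological group and `τ⁺ ≤ τ` a coarser Hausdorff group
topology.  Suppose `(G, τ)` is a countably μ-space and every subset of `G` that is not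
functionally bounded in `(G, τ)` contains an infinite subset that is closed and discrete in
`(G, τ⁺)`.  Then `τ` and `τ⁺` have the same convergent sequences. -/
theorem stmt10 {G : Type*} [Group G] (τ τp : TopologicalSpace G)
    (hτg : @IsTopologicalGroup G τ _) (hτpg : @IsTopologicalGroup G τp _)
    (hτ2 : @T2Space G τ) (hτp2 : @T2Space G τp)
    (hle : ∀ s : Set G, @IsOpen G τp s → @IsOpen G τ s)
    (hcmu : ∀ A : Set G, A.Countable →
      (∀ f : G → ℝ, @Continuous G ℝ τ _ f → ∃ C : ℝ, ∀ a ∈ A, |f a| ≤ C) →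
      @IsCompact G τ (@closure G τ A))
    (hnb : ∀ A : Set G,
      ¬ (∀ f : G → ℝ, @Continuous G ℝ τ _ f → ∃ C : ℝ, ∀ a ∈ A, |f a| ≤ C) →
      ∃ B ⊆ A, B.Infinite ∧ @IsClosed G τp B ∧
        (∀ b ∈ B, ∃ U : Set G, @IsOpen G τp U ∧ U ∩ B = {b})) :
    ∀ (u : ℕ → G) (a : G),
      Filter.Tendsto u Filter.atTop (@nhds G τ a) ↔ Filter.Tendsto u Filter.atTop (@nhds G τp a) := by
  have hle' : τ ≤ τp := fun s hs => hle s hs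
  intro u a
  constructor
  · intro h; exact h.mono_right (nhds_mono hle')
  · intro h
    set A : Set G := insert a (Set.range u) with hA
    have hAc : A.Countable := (Set.countable_range u).insert a
    have hAfb : ∀ f : G → ℝ, @Continuous G ℝ τ _ f → ∃ C : ℝ, ∀ x ∈ A, |f x| ≤ C := by
      by_contra hcon
      obtain ⟨B, hBA, hBinf, hBcl, hBiso⟩ := hnb A hcon
      have hAcp : @IsCompact G τp A := by
        letI := τp
        exact h.isCompact_insert_range
      have hBfin : B.Finite := by
        letI := τp
        exact aux_finite hAcp hBA hBcl hBiso
      exact hBinf hBfin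
    have hK : @IsCompact G τ (@closure G τ A) := hcmu A hAc hAfb
    refine aux_conv hle' hτp2 hK ?_ h
    intro n
    exact @subset_closure G τ A (u n) (Set.mem_insert_iff.2 (Or.inr (Set.mem_range_self n)))
end

section
/- Let G be a complete Hausdorff topological group, and suppose the compact subsets of (G, τ⁺) are sequentially compact (τ⁺ is a Šmulyan-space), where τ⁺ ≤ τ is a coarser Hausdorff group topology with the same convergent sequences as τ. Then every τ⁺-compact subset of G is τ-compact. -/
/-- Let `(G, τ)` be a complete Hausdorff topological abelian group and `τ⁺ ≤ τ` a coarser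
Hausdorff group topology with the same convergent sequences as `τ`, and suppose all
`τ⁺`-compact subsets are `τ⁺`-sequentially compact (`τ⁺` is a Šmulyan space).  Then every
`τ⁺`-compact subset of `G` is `τ`-compact. -/
theorem stmt11 {G : Type*} [AddCommGroup G] (τ τp : TopologicalSpace G)
    (hτg : @IsTopologicalAddGroup G τ _) (hτpg : @IsTopologicalAddGroup G τp _)
    (hτ2 : @T2Space G τ) (hτp2 : @T2Space G τp)
    (hle : ∀ s : Set G, @IsOpen G τp s → @IsOpen G τ s)
    (hcomp : @CompleteSpace G (@IsTopologicalAddGroup.rightUniformSpace G _ τ hτg))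
    (hSm : ∀ K : Set G, @IsCompact G τp K → @IsSeqCompact G τp K)
    (hschur : ∀ (u : ℕ → G) (a : G),
      Filter.Tendsto u Filter.atTop (@nhds G τ a) ↔ Filter.Tendsto u Filter.atTop (@nhds G τp a)) :
    ∀ K : Set G, @IsCompact G τp K → @IsCompact G τ K := by
  intro K hK
  letI U := @IsTopologicalAddGroup.rightUniformSpace G _ τ hτg
  haveI : CompleteSpace G := hcomp
  have hU : U.toTopologicalSpace = τ := rfl
  -- K is τ-sequentially compact
  have hseq : @IsSeqCompact G τ K := by
    intro u hu
    obtain ⟨a, ha, φ, hφ, hconv⟩ := hSm K hK hu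
    exact ⟨a, ha, φ, hφ, (hschur (u ∘ φ) a).2 hconv⟩
  -- K is τ-closed
  have hclosed : @IsClosed G τ K := by
    have h1 : @IsOpen G τp Kᶜ := (@isOpen_compl_iff G K τp).2 (@IsCompact.isClosed G τp hτp2 K hK)
    have : @IsOpen G τ Kᶜ := hle _ h1
    exact (@isOpen_compl_iff G K τ).1 this
  exact TotallyBounded.isCompact_of_isClosed hseq.totallyBounded hclosed
end

section
/- Let G be an abelian topological group, and let U be a neighborhood of the identity in G. Then the polar U^▷ = { χ ∈ Ĝ : χ(U) ⊆ S₊ } is an equicontinuous subset of the character group Ĝ, and U^▷ is compact in the topology of pointwise convergence on Ĝ. -/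
open Complex Real

private lemma key_arg (n : ℕ) (hn : 1 ≤ n) (z : ℂ) (hz : ‖z‖ = 1)
    (h : ∀ k : ℕ, 1 ≤ k → k ≤ n → 0 ≤ (z ^ k).re) :
    |Complex.arg z| ≤ Real.pi / (2 * n) := by
  have hzexp : z = Complex.exp (↑z.arg * Complex.I) := by
    conv_lhs => rw [← Complex.norm_mul_exp_arg_mul_I z]
    rw [hz]; simp
  set θ := z.arg with hθ
  have hcos : ∀ k : ℕ, 1 ≤ k → k ≤ n → 0 ≤ Real.cos (k * |θ|) := by
    intro k hk1 hk2
    have : (z ^ k).re = Real.cos (k * θ) := by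
      rw [hzexp, ← Complex.exp_nat_mul]
      have : (↑k : ℂ) * (↑θ * Complex.I) = ↑((k : ℝ) * θ) * Complex.I := by push_cast; ring
      rw [this, Complex.exp_ofReal_mul_I_re]
    have h0 := h k hk1 hk2
    rw [this] at h0
    rwa [← Real.cos_abs, abs_mul, Nat.abs_cast] at h0
  by_contra hlt
  push_neg at hlt
  have hnpos : (0:ℝ) < n := by positivity
  have htpos : 0 < |θ| := lt_trans (by positivity) hlt
  have hθpi : |θ| ≤ Real.pi := Complex.abs_arg_le_pi z
  set t := |θ| with ht
  set a := (Real.pi / 2) / t with ha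
  have hapos : 0 ≤ a := by positivity
  set k := ⌊a⌋₊ + 1 with hk
  have hk1 : 1 ≤ k := Nat.le_add_left 1 _
  have haln : a < n := by
    rw [ha, div_lt_iff₀ htpos]
    have : Real.pi / (2 * n) < t := hlt
    calc Real.pi / 2 = n * (Real.pi / (2 * n)) := by field_simp
      _ < n * t := by exact mul_lt_mul_of_pos_left hlt hnpos
  have hkn : k ≤ n := by
    have : ⌊a⌋₊ < n := by
      have := Nat.floor_le_floor haln.le
      have h2 : (⌊a⌋₊ : ℝ) ≤ a := Nat.floor_le hapos
      exact_mod_cast lt_of_le_of_lt h2 haln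
    omega
  have hlb : Real.pi / 2 < k * t := by
    have : a < (k : ℝ) := by
      rw [hk]; push_cast; exact Nat.lt_floor_add_one a
    calc Real.pi / 2 = a * t := by rw [ha]; field_simp
      _ < k * t := by exact mul_lt_mul_of_pos_right this htpos
  have hub : (k : ℝ) * t < Real.pi + Real.pi / 2 := by
    have hfl : (⌊a⌋₊ : ℝ) * t ≤ Real.pi / 2 := by
      calc (⌊a⌋₊ : ℝ) * t ≤ a * t := mul_le_mul_of_nonneg_right (Nat.floor_le hapos) htpos.le
        _ = Real.pi / 2 := by rw [ha]; field_simp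
    have : (k : ℝ) * t = (⌊a⌋₊ : ℝ) * t + t := by rw [hk]; push_cast; ring
    rw [this]
    rcases lt_or_eq_of_le hθpi with hlt' | heq
    · linarith
    · -- t = π, then a = 1/2, ⌊a⌋ = 0
      have ha' : a = 1/2 := by rw [ha, heq]; field_simp
      have : ⌊a⌋₊ = 0 := by rw [ha']; norm_num
      rw [this]
      simp only [Nat.cast_zero, zero_mul, zero_add, heq]
      linarith [Real.pi_pos]
  have := Real.cos_neg_of_pi_div_two_lt_of_lt hlb hub
  have := hcos k hk1 hkn
  linarith

/-- Equicontinuity of the polar, without assuming continuity of the characters. -/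
private lemma equic {G : Type*} [AddCommGroup G] [TopologicalSpace G] [IsTopologicalAddGroup G]
    (U : Set G) (hU : U ∈ nhds (0 : G)) (ε : ℝ) (hε : 0 < ε) :
    ∃ V ∈ nhds (0 : G), ∀ χ : G → ℂ, (∀ x y, χ (x + y) = χ x * χ y) →
      (∀ x, ‖χ x‖ = 1) → (∀ x ∈ U, 0 ≤ (χ x).re) →
      ∀ x ∈ V, ‖χ x - 1‖ < ε := by
  set n : ℕ := max 2 (⌈Real.pi / ε⌉₊ + 1) with hn
  have hn2 : 2 ≤ n := le_max_left _ _
  have hn1 : 1 ≤ n := by omega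
  have hnpos : (0:ℝ) < n := by positivity
  have hπn : Real.pi / n < ε := by
    rw [div_lt_iff₀ hnpos]
    have h1 : Real.pi / ε < ⌈Real.pi / ε⌉₊ + 1 := Nat.lt_succ_floor _ |>.trans_le (by
      push_cast; exact add_le_add (Nat.cast_le.mpr (Nat.floor_le_ceil _)) le_rfl)
    have h2 : (⌈Real.pi / ε⌉₊ + 1 : ℝ) ≤ n := by
      have : ⌈Real.pi / ε⌉₊ + 1 ≤ n := le_max_right _ _
      exact_mod_cast this
    have : Real.pi / ε < n := lt_of_lt_of_le h1 h2
    calc Real.pi = (Real.pi / ε) * ε := by field_simp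
      _ < n * ε := mul_lt_mul_of_pos_right this hε
      _ = ε * n := mul_comm _ _
  refine ⟨⋂ k ∈ Finset.Icc 1 n, (fun x : G => k • x) ⁻¹' U, ?_, ?_⟩
  · rw [Filter.biInter_finset_mem]
    intro k _
    have : ContinuousAt (fun x : G => k • x) 0 := (continuous_nsmul k).continuousAt
    apply this.preimage_mem_nhds
    simpa using hU
  · intro χ hhom habs hpol x hx
    simp only [Set.mem_iInter, Set.mem_preimage] at hx
    have hχ0 : χ 0 = 1 := by
      have h1 : χ 0 * χ 0 = χ 0 * 1 := by rw [mul_one, ← hhom]; simp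
      have h2 : χ 0 ≠ 0 := fun h => by simpa [h] using habs 0
      exact mul_left_cancel₀ h2 h1
    have hpow : ∀ k : ℕ, χ (k • x) = (χ x) ^ k := by
      intro k
      induction k with
      | zero => simpa using hχ0
      | succ m ih => rw [succ_nsmul, hhom, ih, pow_succ]
    have hre : ∀ k : ℕ, 1 ≤ k → k ≤ n → 0 ≤ ((χ x) ^ k).re := by
      intro k h1 h2
      rw [← hpow]
      exact hpol _ (hx k (Finset.mem_Icc.mpr ⟨h1, h2⟩))
    have harg := key_arg n hn1 (χ x) (habs x) hre
    have hzexp : χ x = Complex.exp (↑(χ x).arg * Complex.I) := by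
      conv_lhs => rw [← Complex.norm_mul_exp_arg_mul_I (χ x)]
      rw [habs x]; simp
    have habsI : ‖(↑(χ x).arg * Complex.I : ℂ)‖ = |(χ x).arg| := by
      simp
    have hle1 : ‖(↑(χ x).arg * Complex.I : ℂ)‖ ≤ 1 := by
      rw [habsI]
      have : Real.pi / (2 * n) ≤ 1 := by
        rw [div_le_one (by positivity)]
        have : (4:ℝ) ≤ 2 * n := by
          have : (2:ℝ) ≤ n := by exact_mod_cast hn2
          linarith
        linarith [Real.pi_le_four]
      linarith [harg]
    calc ‖χ x - 1‖ = ‖Complex.exp (↑(χ x).arg * Complex.I) - 1‖ := by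
          rw [← hzexp]
      _ ≤ 2 * ‖(↑(χ x).arg * Complex.I : ℂ)‖ := Complex.norm_exp_sub_one_le hle1
      _ = 2 * |(χ x).arg| := by rw [habsI]
      _ ≤ 2 * (Real.pi / (2 * n)) := by linarith [harg]
      _ = Real.pi / n := by field_simp
      _ < ε := hπn

/-- A continuous character of an abelian topological group `G`, viewed as a `ℂ`-valued
function: continuous, additive-to-multiplicative, with unimodular values. -/
def IsChar {G : Type*} [AddCommGroup G] [TopologicalSpace G] (χ : G → ℂ) : Prop :=
  Continuous χ ∧ (∀ x y, χ (x + y) = χ x * χ y) ∧ ∀ x, ‖χ x‖ = 1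

/-- For a neighborhood `U` of `0` in an abelian topological group `G`, the polar
`U^▷ = {χ ∈ Ĝ : Re (χ x) ≥ 0 for x ∈ U}` is equicontinuous and compact in the topology of
pointwise convergence. -/
theorem stmt13 {G : Type*} [AddCommGroup G] [TopologicalSpace G] [IsTopologicalAddGroup G]
    (U : Set G) (hU : U ∈ nhds (0 : G)) :
    let P : Set (G → ℂ) := {χ | IsChar χ ∧ ∀ x ∈ U, 0 ≤ (χ x).re}
    (∀ ε : ℝ, 0 < ε → ∃ V ∈ nhds (0 : G), ∀ χ ∈ P, ∀ x ∈ V, ‖χ x - 1‖ < ε) ∧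
    IsCompact P := by
  intro P
  constructor
  · intro ε hε
    obtain ⟨V, hV, hVp⟩ := equic U hU ε hε
    exact ⟨V, hV, fun χ hχ x hx => hVp χ hχ.1.2.1 hχ.1.2.2 hχ.2 x hx⟩
  · -- P equals the closed set P'
    set P' : Set (G → ℂ) := {χ | (∀ x y, χ (x + y) = χ x * χ y) ∧
        (∀ x, ‖χ x‖ = 1) ∧ ∀ x ∈ U, 0 ≤ (χ x).re} with hP'
    have hPP' : P = P' := by
      ext χ
      constructor
      · rintro ⟨⟨_, hhom, habs⟩, hpol⟩
        exact ⟨hhom, habs, hpol⟩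
      · rintro ⟨hhom, habs, hpol⟩
        refine ⟨⟨?_, hhom, habs⟩, hpol⟩
        -- continuity from equicontinuity
        have hχ0 : χ 0 = 1 := by
          have h1 : χ 0 * χ 0 = χ 0 * 1 := by rw [mul_one, ← hhom]; simp
          have h2 : χ 0 ≠ 0 := fun h => by simpa [h] using habs 0
          exact mul_left_cancel₀ h2 h1
        have hc0 : ContinuousAt χ 0 := by
          rw [ContinuousAt, hχ0, Metric.tendsto_nhds]
          intro ε hε
          obtain ⟨V, hV, hVp⟩ := equic U hU ε hε
          filter_upwards [hV] with x hx
          rw [Complex.dist_eq]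
          exact hVp χ hhom habs hpol x hx
        rw [continuous_iff_continuousAt]
        intro x
        have heq : χ = fun y => χ x * χ (y - x) := by
          funext y
          rw [← hhom]
          simp
        rw [heq]
        have h1 : ContinuousAt (fun y : G => y - x) x := by
          exact (continuous_id.sub continuous_const).continuousAt
        have h2 : ContinuousAt (fun y : G => χ (y - x)) x := by
          have : (x : G) - x = 0 := sub_self x
          exact ContinuousAt.comp (this ▸ hc0) h1
        exact (continuousAt_const.mul h2)
    rw [hPP']
    apply IsCompact.of_isClosed_subset
      (isCompact_univ_pi (fun _ : G => isCompact_sphere (0:ℂ) 1))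
    · -- P' closed
      have c1 : IsClosed {χ : G → ℂ | ∀ x y, χ (x + y) = χ x * χ y} := by
        rw [Set.setOf_forall]
        apply isClosed_iInter; intro x
        rw [Set.setOf_forall]
        apply isClosed_iInter; intro y
        exact isClosed_eq (continuous_apply (x + y))
          ((continuous_apply x).mul (continuous_apply y))
      have c2 : IsClosed {χ : G → ℂ | ∀ x, ‖χ x‖ = 1} := by
        rw [Set.setOf_forall]
        apply isClosed_iInter; intro x
        exact isClosed_eq (continuous_norm.comp (continuous_apply x)) continuous_const
      have c3 : IsClosed {χ : G → ℂ | ∀ x ∈ U, 0 ≤ (χ x).re} := by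
        rw [Set.setOf_forall]
        apply isClosed_iInter; intro x
        rw [Set.setOf_forall]
        apply isClosed_iInter; intro hx
        exact isClosed_le continuous_const (Complex.continuous_re.comp (continuous_apply x))
      have : P' = {χ : G → ℂ | ∀ x y, χ (x + y) = χ x * χ y} ∩
          ({χ | ∀ x, ‖χ x‖ = 1} ∩ {χ | ∀ x ∈ U, 0 ≤ (χ x).re}) := by
        ext χ; simp [hP', Set.mem_setOf_eq, Set.mem_inter_iff]
      rw [this]
      exact c1.inter (c2.inter c3)
    · -- P' ⊆ product of spheres
      rintro χ ⟨_, habs, _⟩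
      intro x _
      rw [mem_sphere_zero_iff_norm]
      exact habs x
end

section
/- Let E be a real locally convex space and define ψ : E′ → Ĥom(E, S) by ψ(χ)(x) = exp(2πi·χ(x)). Then a subset A of E′ is equicontinuous if and only if ψ(A) is an equicontinuous set of characters of the additive topological group E. -/
open Real Complex

lemma aux_abs_exp (s : ℝ) :
    ‖Complex.exp ((s : ℂ) * Complex.I) - 1‖ = 2 * |Real.sin (s / 2)| := by
  have key : Complex.exp ((s : ℂ) * Complex.I) - 1
      = Complex.exp (((s : ℂ) / 2) * Complex.I) *
        (2 * Complex.I * Complex.sin ((s : ℂ) / 2)) := by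
    rw [Complex.sin]
    rw [show (s : ℂ) * Complex.I = ((s:ℂ)/2) * Complex.I + ((s:ℂ)/2) * Complex.I by ring,
      Complex.exp_add]
    rw [show -((s:ℂ)/2) * Complex.I = -(((s:ℂ)/2) * Complex.I) by ring, Complex.exp_neg]
    have h := Complex.exp_ne_zero (((s:ℂ)/2) * Complex.I)
    field_simp
    ring_nf
    rw [Complex.I_sq]
    ring
  rw [key, norm_mul]
  have h1 : ‖Complex.exp (((s : ℂ) / 2) * Complex.I)‖ = 1 := by
    rw [show ((s : ℂ)/2) = ((s/2 : ℝ) : ℂ) by push_cast; ring]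
    exact Complex.norm_exp_ofReal_mul_I _
  rw [h1, one_mul]
  rw [norm_mul, norm_mul, Complex.norm_two, Complex.norm_I, mul_one,
    show ((s : ℂ)/2) = ((s/2 : ℝ) : ℂ) by push_cast; ring, ← Complex.ofReal_sin,
    Complex.norm_real, Real.norm_eq_abs]

lemma aux_abs_exp' (t : ℝ) :
    ‖Complex.exp (2 * Real.pi * Complex.I * (t : ℂ)) - 1‖
      = 2 * |Real.sin (Real.pi * t)| := by
  have : (2 * (Real.pi : ℂ) * Complex.I * (t : ℂ)) = ((2 * Real.pi * t : ℝ) : ℂ) * Complex.I := by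
    push_cast; ring
  rw [this, aux_abs_exp]
  congr 2
  ring

/-- Let `E` be a real locally convex space and `ψ(χ)(x) = exp(2πi·χ(x))`.  A set `A ⊆ E′`
is equicontinuous iff `ψ(A)` is an equicontinuous set of characters of `(E, +)`. -/
theorem stmt15 {E : Type*} [AddCommGroup E] [Module ℝ E] [TopologicalSpace E]
    [IsTopologicalAddGroup E] [ContinuousSMul ℝ E] [LocallyConvexSpace ℝ E]
    (A : Set (E →L[ℝ] ℝ)) :
    (∀ ε : ℝ, 0 < ε → ∃ U ∈ nhds (0 : E), ∀ χ ∈ A, ∀ x ∈ U, |χ x| < ε) ↔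
    (∀ ε : ℝ, 0 < ε → ∃ U ∈ nhds (0 : E), ∀ χ ∈ A, ∀ x ∈ U,
      ‖Complex.exp (2 * Real.pi * Complex.I * (χ x : ℂ)) - 1‖ < ε) := by
  constructor
  · intro h ε hε
    have hδ : (0:ℝ) < ε / (2 * Real.pi + 1) := by positivity
    obtain ⟨U, hU, hbound⟩ := h _ hδ
    refine ⟨U, hU, fun χ hχ x hx => ?_⟩
    rw [aux_abs_exp']
    have h1 : |Real.sin (Real.pi * χ x)| ≤ |Real.pi * χ x| := Real.abs_sin_le_abs
    have h2 : |Real.pi * χ x| = Real.pi * |χ x| := by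
      rw [abs_mul, abs_of_pos Real.pi_pos]
    have h3 := hbound χ hχ x hx
    have hpi := Real.pi_pos
    calc 2 * |Real.sin (Real.pi * χ x)| ≤ 2 * (Real.pi * |χ x|) := by
          rw [← h2]; linarith
      _ < 2 * (Real.pi * (ε / (2 * Real.pi + 1))) := by
          have := mul_lt_mul_of_pos_left h3 hpi
          linarith
      _ ≤ ε := by
          rw [show 2 * (Real.pi * (ε / (2 * Real.pi + 1)))
              = ε * (2 * Real.pi) / (2 * Real.pi + 1) by ring,
            div_le_iff₀ (by positivity)]
          nlinarith
  · intro h ε hε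
    set m : ℝ := min (ε / 2) (1 / 2) with hm
    have hm0 : 0 < m := lt_min (by positivity) (by norm_num)
    have hmhalf : m ≤ 1 / 2 := min_le_right _ _
    have hmε : m < ε := lt_of_le_of_lt (min_le_left _ _) (by linarith)
    obtain ⟨U, hU, hbound⟩ := h (4 * m) (by positivity)
    obtain ⟨V, ⟨hVnhds, hVconv⟩, hVU⟩ :=
      (LocallyConvexSpace.convex_basis_zero ℝ E).mem_iff.mp hU
    refine ⟨V, hVnhds, fun χ hχ x hx => ?_⟩
    by_contra hcon
    push_neg at hcon
    have hxabs : m < |χ x| := lt_of_lt_of_le hmε hcon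
    have hx0 : (0:ℝ) < |χ x| := hm0.trans hxabs
    set t : ℝ := m / |χ x| with ht
    have ht0 : 0 < t := div_pos hm0 hx0
    have ht1 : t ≤ 1 := by
      rw [div_le_one hx0]; exact hxabs.le
    have h0V : (0 : E) ∈ V := mem_of_mem_nhds hVnhds
    have htxV : t • x ∈ V := by
      have := hVconv h0V hx (by linarith : (0:ℝ) ≤ 1 - t) ht0.le (by ring)
      simpa using this
    have hval : χ (t • x) = t * χ x := by
      simp [map_smul, smul_eq_mul]
    have habs : |χ (t • x)| = m := by
      rw [hval, abs_mul, _root_.abs_of_pos ht0, ht]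
      exact div_mul_cancel₀ m (ne_of_gt hx0)
    have hb := hbound χ hχ (t • x) (hVU htxV)
    rw [aux_abs_exp'] at hb
    -- |sin(π * χ(t•x))| = sin(π * m) ≥ 2 * m, contradiction with < 4m
    have hsin : Real.sin (Real.pi * m) ≥ 2 * m := by
      have := Real.mul_le_sin (x := Real.pi * m)
        (by positivity)
        (by nlinarith [Real.pi_pos])
      calc 2 * m = 2 / Real.pi * (Real.pi * m) := by
            field_simp
        _ ≤ Real.sin (Real.pi * m) := this
    have hkey : |Real.sin (Real.pi * χ (t • x))| = Real.sin (Real.pi * m) := by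
      have hsn : (0:ℝ) ≤ Real.sin (Real.pi * m) :=
        Real.sin_nonneg_of_nonneg_of_le_pi (by positivity) (by nlinarith [Real.pi_pos])
      rcases abs_cases (χ (t • x)) with ⟨he, _⟩ | ⟨he, _⟩
      · rw [he] at habs
        rw [habs, _root_.abs_of_nonneg hsn]
      · have hcm : χ (t • x) = -m := by rw [← habs, he]; ring
        rw [hcm, show Real.pi * -m = -(Real.pi * m) by ring, Real.sin_neg, abs_neg,
          _root_.abs_of_nonneg hsn]
    rw [hkey] at hb
    linarith
end
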